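/- For every 0 < ε < 1/4, the μ-mass of the margin region satisfies μ({x : |η(x) − 1/2| ≤ ε}) ≥ (2π)^(−1/2) · min( (ε/Δ)·exp(−(1 + Δ/2)²/2), exp(−1/2)/2 ). -/

import Mathlib

open MeasureTheory Real

/-- Standard Gaussian density on `ℝ^d`. -/
noncomputable def stdGaussianDensity (d : ℕ) (x : EuclideanSpace ℝ (Fin d)) : ℝ :=
  (2 * π) ^ (-(d : ℝ) / 2) * Real.exp (-‖x‖ ^ 2 / 2)

/-- Regression function of the Gaussian translation model:
`η(x) = γ_d(x − m) / (γ_d(x) + γ_d(x − m))`. -/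
noncomputable def gaussEta (d : ℕ) (m : EuclideanSpace ℝ (Fin d))
    (x : EuclideanSpace ℝ (Fin d)) : ℝ :=
  stdGaussianDensity d (x - m) / (stdGaussianDensity d x + stdGaussianDensity d (x - m))

/-- Marginal (mixture) law of the design: density `(γ_d(x) + γ_d(x − m))/2`
with respect to Lebesgue measure. -/
noncomputable def gaussMixture (d : ℕ) (m : EuclideanSpace ℝ (Fin d)) :
    Measure (EuclideanSpace ℝ (Fin d)) :=
  volume.withDensity fun x =>
    ENNReal.ofReal ((stdGaussianDensity d x + stdGaussianDensity d (x - m)) / 2)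

lemma stdGaussianDensity_pos (d : ℕ) (x : EuclideanSpace ℝ (Fin d)) :
    0 < stdGaussianDensity d x := by
  unfold stdGaussianDensity
  positivity

lemma sigmoid_bound {t : ℝ} (ht : |t| ≤ 1/4) :
    |Real.exp t / (1 + Real.exp t) - 1/2| ≤ |t| := by
  have h1 : (0:ℝ) < 1 + Real.exp t := by positivity
  have key : |Real.exp t - 1| ≤ 2 * |t| := by
    rcases le_or_gt 0 t with h | h
    · have ht' : t ≤ 1/4 := le_trans (le_abs_self t) ht
      have hle2 : Real.exp t ≤ 2 := by
        calc Real.exp t ≤ Real.exp (1/4) := Real.exp_le_exp.2 ht'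
        _ ≤ 2 := by
              nlinarith [Real.exp_one_lt_d9, Real.exp_nonneg (1/4:ℝ),
                Real.exp_nat_mul (1/4:ℝ) 4, Real.exp_pos (1/4:ℝ),
                sq_nonneg (Real.exp (1/4) - 2)]
      have h3 : 1 - t ≤ Real.exp (-t) := by linarith [Real.add_one_le_exp (-t)]
      have h4 : Real.exp t - 1 ≤ t * Real.exp t := by
        have := mul_le_mul_of_nonneg_left h3 (Real.exp_pos t).le
        rw [← Real.exp_add] at this
        simp at this
        nlinarith
      rw [abs_of_nonneg (by linarith [Real.one_le_exp h]), abs_of_nonneg h]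
      nlinarith [Real.exp_pos t]
    · rw [abs_of_nonpos (by linarith [Real.exp_lt_one_iff.2 h]), abs_of_neg h]
      have := Real.add_one_le_exp t
      linarith
  have h2 : Real.exp t / (1 + Real.exp t) - 1/2 = (Real.exp t - 1) / (2 * (1 + Real.exp t)) := by
    field_simp
    ring
  rw [h2, abs_div, abs_of_pos (by positivity : (0:ℝ) < 2 * (1 + Real.exp t)),
    div_le_iff₀ (by positivity)]
  nlinarith [abs_nonneg t, Real.exp_pos t, abs_nonneg (Real.exp t - 1)]

lemma gaussEta_eq (d : ℕ) (m x : EuclideanSpace ℝ (Fin d)) :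
    gaussEta d m x =
      Real.exp (inner ℝ x m - ‖m‖ ^ 2 / 2) / (1 + Real.exp ((inner ℝ x m : ℝ) - ‖m‖ ^ 2 / 2)) := by
  have hx := stdGaussianDensity_pos d x
  have hxm := stdGaussianDensity_pos d (x - m)
  have hratio : stdGaussianDensity d (x - m) / stdGaussianDensity d x
      = Real.exp ((inner ℝ x m : ℝ) - ‖m‖ ^ 2 / 2) := by
    unfold stdGaussianDensity
    rw [mul_div_mul_left _ _ (by positivity), ← Real.exp_sub]
    congr 1
    rw [norm_sub_sq_real]
    ring
  rw [gaussEta, ← hratio]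
  field_simp

lemma lintegral_pi_prod : ∀ (n : ℕ) (f : Fin n → ℝ → ENNReal), (∀ i, Measurable (f i)) →
    ∫⁻ x : Fin n → ℝ, ∏ i, f i (x i) = ∏ i, ∫⁻ t : ℝ, f i t := by
  intro n
  induction n with
  | zero =>
    intro f hf
    simp [lintegral_const]
    rw [show (volume : Measure (Fin 0 → ℝ)) = Measure.pi (fun _ => volume) from rfl]
    simp
  | succ n ih =>
    intro f hf
    have hmp := (volume_preserving_piFinSuccAbove (fun _ : Fin (n+1) => ℝ) 0).symm
    have hmeas : Measurable (fun x : Fin (n+1) → ℝ => ∏ i, f i (x i)) := by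
      exact Finset.measurable_prod _ fun i _ => (hf i).comp (measurable_pi_apply i)
    rw [← hmp.lintegral_comp hmeas]
    have heq : ∀ y : ℝ × (Fin n → ℝ),
        (∏ i, f i (((MeasurableEquiv.piFinSuccAbove (fun _ : Fin (n+1) => ℝ) 0).symm y) i))
        = f 0 y.1 * ∏ i : Fin n, f i.succ (y.2 i) := by
      intro y
      have hsymm : (⇑(MeasurableEquiv.piFinSuccAbove (fun _ : Fin (n+1) => ℝ) 0).symm y)
          = Fin.insertNth 0 y.1 y.2 := rfl
      rw [hsymm, Fin.prod_univ_succ, Fin.insertNth_apply_same]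
      simp only [← Fin.succAbove_zero, Fin.insertNth_apply_succAbove]
    simp_rw [heq]
    have hm2 : Measurable (fun y : ℝ × (Fin n → ℝ) => f 0 y.1 * ∏ i : Fin n, f i.succ (y.2 i)) := by
      apply Measurable.mul
      · exact (hf 0).comp measurable_fst
      · exact Finset.measurable_prod _ fun i _ =>
          (hf i.succ).comp ((measurable_pi_apply i).comp measurable_snd)
    rw [show (volume : Measure (ℝ × (Fin n → ℝ))) = (volume : Measure ℝ).prod volume from rfl, lintegral_prod _ hm2.aemeasurable]
    have hstep : ∀ x : ℝ, (∫⁻ y : Fin n → ℝ, f 0 (x, y).1 * ∏ i : Fin n, f i.succ ((x, y).2 i))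
        = f 0 x * ∫⁻ y : Fin n → ℝ, ∏ i : Fin n, f i.succ (y i) := by
      intro x
      exact lintegral_const_mul (f 0 x)
        (show Measurable fun y : Fin n → ℝ => ∏ i : Fin n, f i.succ (y i) from
          Finset.measurable_prod _ fun i _ => (hf i.succ).comp (measurable_pi_apply i))
    simp_rw [hstep]
    rw [lintegral_mul_const _ (hf 0), ih _ (fun i => hf i.succ), Fin.prod_univ_succ]

lemma oneDimGauss_lintegral :
    ∫⁻ t : ℝ, ENNReal.ofReal ((2 * π) ^ (-(1:ℝ) / 2) * Real.exp (-t ^ 2 / 2)) = 1 := by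
  have hint : Integrable (fun t : ℝ => (2 * π) ^ (-(1:ℝ) / 2) * Real.exp (-t ^ 2 / 2)) := by
    apply Integrable.const_mul
    have : (fun t : ℝ => Real.exp (-t ^ 2 / 2)) = fun t : ℝ => Real.exp (-(1/2) * t ^ 2) := by
      ext t; ring_nf
    rw [this]
    exact integrable_exp_neg_mul_sq (by norm_num)
  rw [← ofReal_integral_eq_lintegral_ofReal hint
    (Filter.Eventually.of_forall fun t => by positivity)]
  have : ∫ t : ℝ, (2 * π) ^ (-(1:ℝ) / 2) * Real.exp (-t ^ 2 / 2)
      = (2 * π) ^ (-(1:ℝ) / 2) * ∫ t : ℝ, Real.exp (-(1/2) * t ^ 2) := by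
    rw [integral_const_mul]
    congr 1
    apply integral_congr_ae
    filter_upwards with t
    ring_nf
  rw [this, integral_gaussian]
  have h2π : (0:ℝ) < 2 * π := by positivity
  have : √(π / (1/2)) = (2 * π) ^ ((1:ℝ)/2) := by
    rw [show π / (1/2 : ℝ) = 2 * π by ring, Real.sqrt_eq_rpow]
  rw [this, ← Real.rpow_add h2π]
  norm_num

lemma gauss_marginal (d : ℕ) (b : OrthonormalBasis (Fin d) ℝ (EuclideanSpace ℝ (Fin d)))
    (i₀ : Fin d) (c₁ c₂ : ℝ) :
    ∫⁻ x in {x | b.repr x i₀ ∈ Set.Icc c₁ c₂}, ENNReal.ofReal (stdGaussianDensity d x / 2)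
      = ∫⁻ t in Set.Icc c₁ c₂,
          ENNReal.ofReal ((2 * π) ^ (-(1:ℝ) / 2) * Real.exp (-t ^ 2 / 2) / 2) := by
  classical
  set c : ℝ := (2 * π) ^ (-(1:ℝ) / 2) with hc
  have hcpos : 0 < c := by rw [hc]; positivity
  -- the coordinate factors
  set p : ℝ → ENNReal := fun t => ENNReal.ofReal (c * Real.exp (-t ^ 2 / 2)) with hp
  set q : ℝ → ENNReal := fun t =>
    if t ∈ Set.Icc c₁ c₂ then ENNReal.ofReal (c * Real.exp (-t ^ 2 / 2) / 2) else 0 with hq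
  set f : Fin d → ℝ → ENNReal := fun i t => if i = i₀ then q t else p t with hf
  have hpm : Measurable p := by
    apply ENNReal.measurable_ofReal.comp
    fun_prop
  have hqm : Measurable q := by
    apply Measurable.ite measurableSet_Icc
    · apply ENNReal.measurable_ofReal.comp; fun_prop
    · exact measurable_const
  have hfm : ∀ i, Measurable (f i) := by
    intro i; rw [hf]; dsimp only
    split <;> [exact hqm; exact hpm]
  -- Step a+b : rewrite set integral as full integral of F ∘ b.repr
  set F : EuclideanSpace ℝ (Fin d) → ENNReal := fun y =>
    if y i₀ ∈ Set.Icc c₁ c₂ then ENNReal.ofReal (stdGaussianDensity d y / 2) else 0 with hF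
  have hFm : Measurable F := by
    apply Measurable.ite
    · exact (show Measurable fun y : EuclideanSpace ℝ (Fin d) => y i₀ from
        (measurable_pi_apply i₀).comp (WithLp.measurable_ofLp _ _)) measurableSet_Icc
    · apply ENNReal.measurable_ofReal.comp
      have : Continuous fun y : EuclideanSpace ℝ (Fin d) => stdGaussianDensity d y / 2 := by
        unfold stdGaussianDensity
        continuity
      exact this.measurable
    · exact measurable_const
  have hrepr_meas : Measurable fun x : EuclideanSpace ℝ (Fin d) => b.repr x i₀ :=
    (show Measurable fun y : EuclideanSpace ℝ (Fin d) => y i₀ from (measurable_pi_apply i₀).comp (WithLp.measurable_ofLp _ _)).comp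
      b.repr.continuous.measurable
  have hset : MeasurableSet {x : EuclideanSpace ℝ (Fin d) | b.repr x i₀ ∈ Set.Icc c₁ c₂} :=
    hrepr_meas measurableSet_Icc
  have step1 : ∫⁻ x in {x | b.repr x i₀ ∈ Set.Icc c₁ c₂},
      ENNReal.ofReal (stdGaussianDensity d x / 2) = ∫⁻ x, F (b.repr x) := by
    rw [← lintegral_indicator hset]
    apply lintegral_congr
    intro x
    rw [Set.indicator_apply, hF]
    simp only [Set.mem_setOf_eq]
    have : stdGaussianDensity d (b.repr x) = stdGaussianDensity d x := by
      unfold stdGaussianDensity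
      rw [b.repr.norm_map]
    rw [this]
  have step2 : ∫⁻ x, F (b.repr x) = ∫⁻ y, F y :=
    b.measurePreserving_repr.lintegral_comp hFm
  have step3 : ∫⁻ y, F y
      = ∫⁻ z : Fin d → ℝ, F (((MeasurableEquiv.toLp 2 (Fin d → ℝ)).symm).symm z) :=
    (((EuclideanSpace.volume_preserving_symm_measurableEquiv_toLp (Fin d)).symm _).lintegral_comp hFm).symm
  have hcd : c ^ (d : ℕ) = (2 * π) ^ (-(d:ℝ) / 2) := by
    rw [hc, ← Real.rpow_natCast ((2 * π) ^ (-(1:ℝ)/2)) d, ← Real.rpow_mul (by positivity)]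
    norm_num
    ring_nf
  have step4 : ∀ z : Fin d → ℝ,
      F (((MeasurableEquiv.toLp 2 (Fin d → ℝ)).symm).symm z) = ∏ i, f i (z i) := by
    intro z
    have hcoord : ∀ i, (((MeasurableEquiv.toLp 2 (Fin d → ℝ)).symm).symm z) i = z i := fun i => rfl
    have hnorm : ‖((MeasurableEquiv.toLp 2 (Fin d → ℝ)).symm).symm z‖ ^ 2 = ∑ i, z i ^ 2 := by
      rw [EuclideanSpace.norm_eq, Real.sq_sqrt (by positivity)]
      exact Finset.sum_congr rfl fun i _ => by rw [hcoord, Real.norm_eq_abs, sq_abs]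
    have hsplit : ∏ i, f i (z i) = q (z i₀) * ∏ i ∈ Finset.univ.erase i₀, p (z i) := by
      rw [← Finset.mul_prod_erase Finset.univ _ (Finset.mem_univ i₀)]
      congr 1
      · rw [hf]; simp
      · exact Finset.prod_congr rfl fun i hi => by
          rw [hf]; simp [Finset.ne_of_mem_erase hi]
    rw [hsplit, hF]
    simp only [hcoord]
    by_cases hmem : z i₀ ∈ Set.Icc c₁ c₂
    · rw [if_pos hmem, hq]
      simp only [if_pos hmem]
      have hprod : ∏ i ∈ Finset.univ.erase i₀, p (z i)
          = ENNReal.ofReal (∏ i ∈ Finset.univ.erase i₀, (c * Real.exp (-(z i) ^ 2 / 2))) := by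
        rw [ENNReal.ofReal_prod_of_nonneg (fun i _ => by positivity)]
      rw [hprod, ← ENNReal.ofReal_mul (by positivity)]
      congr 1
      have hall : ∏ i, (c * Real.exp (-(z i) ^ 2 / 2))
          = (2 * π) ^ (-(d:ℝ) / 2) * Real.exp (-(∑ i, z i ^ 2) / 2) := by
        rw [Finset.prod_mul_distrib, Finset.prod_const, Finset.card_univ, Fintype.card_fin, hcd]
        congr 1
        rw [← Real.exp_sum]
        congr 1
        rw [← Finset.sum_div, ← Finset.sum_neg_distrib]
      have := Finset.mul_prod_erase Finset.univ
        (fun i => c * Real.exp (-(z i) ^ 2 / 2)) (Finset.mem_univ i₀)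
      unfold stdGaussianDensity
      rw [hnorm]
      rw [hall] at this
      rw [div_mul_eq_mul_div, ← this]
    · rw [if_neg hmem, hq]
      simp [hmem]
  have step5 : ∫⁻ z : Fin d → ℝ, ∏ i, f i (z i) = ∫⁻ t, q t := by
    rw [lintegral_pi_prod d f hfm,
      ← Finset.mul_prod_erase Finset.univ _ (Finset.mem_univ i₀)]
    have h1 : ∫⁻ t, f i₀ t = ∫⁻ t, q t := by rw [hf]; simp
    have h2 : ∀ i ∈ Finset.univ.erase i₀, ∫⁻ t, f i t = 1 := by
      intro i hi
      rw [hf]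
      simp only [if_neg (Finset.ne_of_mem_erase hi)]
      exact oneDimGauss_lintegral
    rw [h1, Finset.prod_congr rfl h2, Finset.prod_const_one, mul_one]
  have step6 : ∫⁻ t, q t = ∫⁻ t in Set.Icc c₁ c₂,
      ENNReal.ofReal ((2 * π) ^ (-(1:ℝ) / 2) * Real.exp (-t ^ 2 / 2) / 2) := by
    rw [← lintegral_indicator measurableSet_Icc]
    apply lintegral_congr
    intro t
    rw [hq, Set.indicator_apply, hc]
  rw [step1, step2, step3]
  simp_rw [step4]
  rw [step5, step6]

/-- Margin lower bound (Proposition C.1, finite-dimensional form):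
for `0 < ε < 1/4`,
`μ(|η − 1/2| ≤ ε) ≥ (2π)^(−1/2) · min((ε/Δ)·exp(−(1+Δ/2)²/2), exp(−1/2)/2)`. -/
theorem margin_lower_bound (d : ℕ) (hd : 1 ≤ d)
    (m : EuclideanSpace ℝ (Fin d)) (hm : m ≠ 0)
    (ε : ℝ) (hε0 : 0 < ε) (hε : ε < 1 / 4) :
    ENNReal.ofReal ((2 * π) ^ (-(1 : ℝ) / 2) *
        min ((ε / ‖m‖) * Real.exp (-(1 + ‖m‖ / 2) ^ 2 / 2)) (Real.exp (-(1 : ℝ) / 2) / 2))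
      ≤ gaussMixture d m {x | |gaussEta d m x - 1 / 2| ≤ ε} := by
  classical
  set Δ : ℝ := ‖m‖ with hΔdef
  have hΔ : 0 < Δ := norm_pos_iff.2 hm
  set u : EuclideanSpace ℝ (Fin d) := Δ⁻¹ • m with hu
  have hunorm : ‖u‖ = 1 := by
    rw [hu, norm_smul, norm_inv, Real.norm_eq_abs, abs_of_pos hΔ, ← hΔdef,
      inv_mul_cancel₀ hΔ.ne']
  set i₀ : Fin d := ⟨0, hd⟩ with hi₀
  -- orthonormal basis with b i₀ = u
  have hcard : Module.finrank ℝ (EuclideanSpace ℝ (Fin d)) = Fintype.card (Fin d) :=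
    finrank_euclideanSpace
  have horth : Orthonormal ℝ (({i₀} : Set (Fin d)).restrict (fun _ => u)) := by
    constructor
    · intro i; exact hunorm
    · intro i j hij
      exact absurd (Subtype.ext ((i.2 : (i : Fin d) ∈ ({i₀} : Set (Fin d))).trans
        ((j.2 : (j : Fin d) ∈ ({i₀} : Set (Fin d))).symm))) hij
  obtain ⟨b, hb⟩ := horth.exists_orthonormalBasis_extension_of_card_eq hcard
  have hbu : b i₀ = u := hb i₀ rfl
  clear_value Δ u i₀
  set c₁ : ℝ := Δ / 2 - ε / Δ with hc₁
  set c₂ : ℝ := Δ / 2 + ε / Δ with hc₂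
  set T : Set (EuclideanSpace ℝ (Fin d)) := {x | b.repr x i₀ ∈ Set.Icc c₁ c₂} with hT
  have hrepr_meas : Measurable fun x : EuclideanSpace ℝ (Fin d) => b.repr x i₀ :=
    (show Measurable fun y : EuclideanSpace ℝ (Fin d) => y i₀ from (measurable_pi_apply i₀).comp (WithLp.measurable_ofLp _ _)).comp
      b.repr.continuous.measurable
  have hTmeas : MeasurableSet T := hrepr_meas measurableSet_Icc
  clear_value c₁ c₂ T
  -- T is included in the margin set
  have hTsub : T ⊆ {x | |gaussEta d m x - 1 / 2| ≤ ε} := by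
    intro x hx
    have hr : b.repr x i₀ = Δ⁻¹ * (inner ℝ x m : ℝ) := by
      rw [OrthonormalBasis.repr_apply_apply, hbu, hu, real_inner_smul_left, real_inner_comm]
    have hx' : c₁ ≤ b.repr x i₀ ∧ b.repr x i₀ ≤ c₂ := by rw [hT] at hx; exact hx
    set t : ℝ := (inner ℝ x m : ℝ) - ‖m‖ ^ 2 / 2 with ht
    have htr : t = Δ * (b.repr x i₀ - Δ / 2) := by
      rw [ht, hr, ← hΔdef]
      field_simp
    have habs : |t| ≤ ε := by
      rw [htr, abs_mul, abs_of_pos hΔ]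
      have h1 : |b.repr x i₀ - Δ / 2| ≤ ε / Δ := by
        have ha := hx'.1; have hb' := hx'.2
        rw [hc₁] at ha; rw [hc₂] at hb'
        rw [abs_le]
        constructor <;> [linarith; linarith]
      calc Δ * |b.repr x i₀ - Δ / 2| ≤ Δ * (ε / Δ) :=
            mul_le_mul_of_nonneg_left h1 hΔ.le
        _ = ε := by field_simp
    show |gaussEta d m x - 1 / 2| ≤ ε
    rw [gaussEta_eq, ← ht]
    exact le_trans (sigmoid_bound (le_trans habs (by linarith))) habs
  -- measure chain
  have hchain : ∫⁻ t in Set.Icc c₁ c₂,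
      ENNReal.ofReal ((2 * π) ^ (-(1:ℝ) / 2) * Real.exp (-t ^ 2 / 2) / 2)
      ≤ gaussMixture d m {x | |gaussEta d m x - 1 / 2| ≤ ε} := by
    rw [← gauss_marginal d b i₀ c₁ c₂, ← hT]
    calc ∫⁻ x in T, ENNReal.ofReal (stdGaussianDensity d x / 2)
        ≤ ∫⁻ x in T,
            ENNReal.ofReal ((stdGaussianDensity d x + stdGaussianDensity d (x - m)) / 2) := by
          apply lintegral_mono
          intro x
          apply ENNReal.ofReal_le_ofReal
          have := stdGaussianDensity_pos d (x - m)
          linarith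
      _ = gaussMixture d m T := (withDensity_apply _ hTmeas).symm
      _ ≤ gaussMixture d m {x | |gaussEta d m x - 1 / 2| ≤ ε} := measure_mono hTsub
  refine le_trans ?_ hchain
  -- final one-dimensional estimate
  set c : ℝ := (2 * π) ^ (-(1:ℝ) / 2) with hcdef
  have hcpos : 0 < c := by rw [hcdef]; positivity
  clear_value c
  have hmeas2 : Measurable fun t : ℝ => ENNReal.ofReal (c * Real.exp (-t ^ 2 / 2) / 2) := by
    apply ENNReal.measurable_ofReal.comp
    exact ((Real.measurable_exp.comp ((measurable_id.pow_const 2).neg.div_const 2)).const_mul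
      c).div_const 2
  rcases le_or_gt ε Δ with hεΔ | hεΔ
  · -- case ε ≤ Δ
    have hεΔ1 : ε / Δ ≤ 1 := (div_le_one hΔ).2 hεΔ
    have hbound : ∀ t ∈ Set.Icc c₁ c₂,
        ENNReal.ofReal (c * Real.exp (-(1 + Δ/2) ^ 2 / 2) / 2)
          ≤ ENNReal.ofReal (c * Real.exp (-t ^ 2 / 2) / 2) := by
      intro t htmem
      apply ENNReal.ofReal_le_ofReal
      have ht2 : t ^ 2 ≤ (1 + Δ/2) ^ 2 := by
        apply sq_le_sq'
        · have := htmem.1; rw [hc₁] at this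
          have hεΔ' : ε / Δ ≤ 1 := hεΔ1
          nlinarith
        · have := htmem.2; rw [hc₂] at this
          nlinarith
      have : Real.exp (-(1 + Δ/2) ^ 2 / 2) ≤ Real.exp (-t ^ 2 / 2) :=
        Real.exp_le_exp.2 (by linarith)
      nlinarith
    calc ENNReal.ofReal (c * min ((ε / Δ) * Real.exp (-(1 + Δ/2) ^ 2 / 2))
            (Real.exp (-(1:ℝ)/2) / 2))
        ≤ ENNReal.ofReal ((c * Real.exp (-(1 + Δ/2) ^ 2 / 2) / 2) * (2 * (ε / Δ))) := by
          apply ENNReal.ofReal_le_ofReal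
          calc c * min ((ε / Δ) * Real.exp (-(1 + Δ/2) ^ 2 / 2)) (Real.exp (-(1:ℝ)/2) / 2)
              ≤ c * ((ε / Δ) * Real.exp (-(1 + Δ/2) ^ 2 / 2)) :=
                mul_le_mul_of_nonneg_left (min_le_left _ _) hcpos.le
            _ = (c * Real.exp (-(1 + Δ/2) ^ 2 / 2) / 2) * (2 * (ε / Δ)) := by ring
      _ = ENNReal.ofReal (c * Real.exp (-(1 + Δ/2) ^ 2 / 2) / 2) * ENNReal.ofReal (2 * (ε / Δ)) :=
          ENNReal.ofReal_mul (by positivity)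
      _ = ENNReal.ofReal (c * Real.exp (-(1 + Δ/2) ^ 2 / 2) / 2) * volume (Set.Icc c₁ c₂) := by
          rw [Real.volume_Icc, hc₁, hc₂]
          congr 1
          ring_nf
      _ = ∫⁻ t in Set.Icc c₁ c₂,
            ENNReal.ofReal (c * Real.exp (-(1 + Δ/2) ^ 2 / 2) / 2) := (setLIntegral_const _ _).symm
      _ ≤ ∫⁻ t in Set.Icc c₁ c₂, ENNReal.ofReal (c * Real.exp (-t ^ 2 / 2) / 2) :=
          setLIntegral_mono hmeas2 hbound
  · -- case Δ < ε
    have hΔ14 : Δ < 1/4 := lt_trans hεΔ hε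
    have hsub : Set.Icc (Δ/2 - 1) (Δ/2) ⊆ Set.Icc c₁ c₂ := by
      apply Set.Icc_subset_Icc
      · rw [hc₁]
        have : 1 ≤ ε / Δ := (one_le_div hΔ).2 hεΔ.le
        linarith
      · rw [hc₂]
        have : 0 ≤ ε / Δ := by positivity
        linarith
    have hbound : ∀ t ∈ Set.Icc (Δ/2 - 1) (Δ/2),
        ENNReal.ofReal (c * (Real.exp (-(1:ℝ)/2) / 2))
          ≤ ENNReal.ofReal (c * Real.exp (-t ^ 2 / 2) / 2) := by
      intro t htmem
      apply ENNReal.ofReal_le_ofReal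
      have ht2 : t ^ 2 ≤ 1 := by
        have h1 := htmem.1; have h2 := htmem.2
        nlinarith
      have h3 : Real.exp (-(1:ℝ)/2) ≤ Real.exp (-t ^ 2 / 2) := Real.exp_le_exp.2 (by linarith)
      have h4 := mul_le_mul_of_nonneg_left h3 hcpos.le
      linarith
    calc ENNReal.ofReal (c * min ((ε / Δ) * Real.exp (-(1 + Δ/2) ^ 2 / 2))
            (Real.exp (-(1:ℝ)/2) / 2))
        ≤ ENNReal.ofReal (c * (Real.exp (-(1:ℝ)/2) / 2)) := by
          apply ENNReal.ofReal_le_ofReal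
          exact mul_le_mul_of_nonneg_left (min_le_right _ _) hcpos.le
      _ = ENNReal.ofReal (c * (Real.exp (-(1:ℝ)/2) / 2)) * volume (Set.Icc (Δ/2 - 1) (Δ/2)) := by
          rw [Real.volume_Icc]
          norm_num
      _ = ∫⁻ t in Set.Icc (Δ/2 - 1) (Δ/2),
            ENNReal.ofReal (c * (Real.exp (-(1:ℝ)/2) / 2)) := (setLIntegral_const _ _).symm
      _ ≤ ∫⁻ t in Set.Icc (Δ/2 - 1) (Δ/2),
            ENNReal.ofReal (c * Real.exp (-t ^ 2 / 2) / 2) :=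
          setLIntegral_mono hmeas2 hbound
      _ ≤ ∫⁻ t in Set.Icc c₁ c₂, ENNReal.ofReal (c * Real.exp (-t ^ 2 / 2) / 2) :=
          lintegral_mono' (Measure.restrict_mono hsub le_rfl) le_rfl
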